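/- For a p/t-net S and distinct transitions a, b ∈ T: if for every reachable marking M with both a and b enabled in M there exists v ∈ T* with the string avb enabled in M (i.e., a never kills an enabled b), then there exists k ∈ ℕ such that for every reachable marking M with both a and b enabled in M there exists w ∈ T* with |w| ≤ k and the string awb enabled in M. -/

import Mathlib

open Classical in
/-- The marking obtained by firing transition `a` in marking `M`:
tokens are removed from entries of `a` and added to exits of `a`. -/
noncomputable def fire {P T : Type} (Fpt : P → T → Prop) (Ftp : T → P → Prop)
    (M : P → ℕ) (a : T) : P → ℕ :=
  fun p => M p - (if Fpt p a then 1 else 0) + (if Ftp a p then 1 else 0)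

/-- Transition `a` is enabled in marking `M` (all its entries are marked). -/
def Enabled {P T : Type} (Fpt : P → T → Prop) (M : P → ℕ) (a : T) : Prop :=
  ∀ p, Fpt p a → 1 ≤ M p

/-- `Fires Fpt Ftp M w M'` means the string `w` is enabled in `M` and its
execution leads from `M` to `M'` (the predicate `M w M'`). -/
inductive Fires {P T : Type} (Fpt : P → T → Prop) (Ftp : T → P → Prop) :
    (P → ℕ) → List T → (P → ℕ) → Prop
  | nil (M : P → ℕ) : Fires Fpt Ftp M [] M
  | cons {M M'' : P → ℕ} {a : T} {w : List T} :
      Enabled Fpt M a → Fires Fpt Ftp (fire Fpt Ftp M a) w M'' →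
      Fires Fpt Ftp M (a :: w) M''

/-- The string `w` is enabled in marking `M` (the predicate `M w`). -/
def EnabledSeq {P T : Type} (Fpt : P → T → Prop) (Ftp : T → P → Prop)
    (M : P → ℕ) (w : List T) : Prop :=
  ∃ M', Fires Fpt Ftp M w M'

/-- `M` is reachable from the initial marking `M0`. -/
def Reachable {P T : Type} (Fpt : P → T → Prop) (Ftp : T → P → Prop)
    (M0 M : P → ℕ) : Prop :=
  ∃ w : List T, Fires Fpt Ftp M0 w M

/-- Monotonicity: a string enabled in `M` is enabled in any larger marking. -/
theorem fires_mono {P T : Type} {Fpt : P → T → Prop} {Ftp : T → P → Prop}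
    {M N : P → ℕ} {w : List T} (hf : Fires Fpt Ftp M w N) :
    ∀ M' : P → ℕ, (∀ p, M p ≤ M' p) → ∃ N', Fires Fpt Ftp M' w N' := by
  induction hf with
  | nil M => exact fun M' _ => ⟨M', Fires.nil M'⟩
  | cons hen _ ih =>
    rename_i M M'' c w hf
    intro M' hle
    have hen' : Enabled Fpt M' c := fun p hp => le_trans (hen p hp) (hle p)
    obtain ⟨N', hN'⟩ := ih (fire Fpt Ftp M' c) (fun p => by
      unfold fire
      have := hle p
      omega)
    exact ⟨N', Fires.cons hen' hN'⟩

theorem enabledSeq_mono {P T : Type} {Fpt : P → T → Prop} {Ftp : T → P → Prop}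
    {M M' : P → ℕ} {w : List T} (hle : ∀ p, M p ≤ M' p)
    (hw : EnabledSeq Fpt Ftp M w) : EnabledSeq Fpt Ftp M' w := by
  obtain ⟨N, hN⟩ := hw
  exact fires_mono hN M' hle

open Classical in
/-- If in a p/t-net the action `a` never kills an enabled `b`, then there is a
uniform bound `k`: in every reachable marking enabling both `a` and `b`, the
execution of `a` postpones `b` for at most `k` steps. -/
theorem exists_uniform_postpone_bound {P T : Type} [Fintype P] [Fintype T]
    (Fpt : P → T → Prop) (Ftp : T → P → Prop) (M0 : P → ℕ)
    (a b : T) (hab : a ≠ b)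
    (h : ∀ M : P → ℕ, Reachable Fpt Ftp M0 M →
      Enabled Fpt M a → Enabled Fpt M b →
      ∃ v : List T, EnabledSeq Fpt Ftp M (a :: (v ++ [b]))) :
    ∃ k : ℕ, ∀ M : P → ℕ, Reachable Fpt Ftp M0 M →
      Enabled Fpt M a → Enabled Fpt M b →
      ∃ w : List T, w.length ≤ k ∧ EnabledSeq Fpt Ftp M (a :: (w ++ [b])) := by
  by_contra hcon
  push_neg at hcon
  -- for each k, a reachable marking where every witness has length > k
  choose M hreach hEa hEb hbad using hcon
  -- minimal witness length for each k
  have hex : ∀ k : ℕ, ∃ n : ℕ, ∃ v : List T,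
      v.length = n ∧ EnabledSeq Fpt Ftp (M k) (a :: (v ++ [b])) := by
    intro k
    obtain ⟨v, hv⟩ := h (M k) (hreach k) (hEa k) (hEb k)
    exact ⟨v.length, v, rfl, hv⟩
  let n : ℕ → ℕ := fun k => Nat.find (hex k)
  have hnspec : ∀ k, ∃ v : List T, v.length = n k ∧
      EnabledSeq Fpt Ftp (M k) (a :: (v ++ [b])) := fun k => Nat.find_spec (hex k)
  have hnmin : ∀ k m, (∃ v : List T, v.length = m ∧
      EnabledSeq Fpt Ftp (M k) (a :: (v ++ [b]))) → n k ≤ m :=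
    fun k m hm => Nat.find_min' (hex k) hm
  have hngt : ∀ k, k < n k := by
    intro k
    by_contra hle
    push_neg at hle
    obtain ⟨v, hvl, hv⟩ := hnspec k
    exact hbad k v (by omega) hv
  -- subsequence along which n is strictly increasing
  let g : ℕ → ℕ := fun m => Nat.rec 0 (fun _ gm => n gm) m
  have hg : ∀ m, g (m + 1) = n (g m) := fun m => rfl
  have hninc : ∀ m, n (g m) < n (g (m + 1)) := by
    intro m
    rw [hg]
    exact hngt (n (g m))
  -- Dickson's lemma
  have hpwo : Set.IsPWO (Set.univ : Set (P → ℕ)) := Set.isPWO_of_wellQuasiOrderedLE _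
  obtain ⟨i, j, hij, hle⟩ := hpwo.exists_lt (f := fun m => M (g m)) (fun m => Set.mem_univ _)
  obtain ⟨v, hvl, hv⟩ := hnspec (g i)
  have hv' : EnabledSeq Fpt Ftp (M (g j)) (a :: (v ++ [b])) :=
    enabledSeq_mono (fun p => hle p) hv
  have h1 : n (g j) ≤ n (g i) := hvl ▸ hnmin (g j) v.length ⟨v, rfl, hv'⟩
  have h2 : n (g i) < n (g j) := by
    have hmono : StrictMono (fun m => n (g m)) := strictMono_nat_of_lt_succ hninc
    exact hmono hij
  omega
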